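/- For any fixed constant c > 0, the function g(ℓ) = 2ℓ²·Φ(−c·ℓ/2) on (0, ∞) attains its global maximum at the unique point ℓ̂ = 2m̂/c, where m̂ is the unique positive real number satisfying 2Φ(−m̂) = m̂·φ(m̂); moreover the corresponding acceptance value satisfies 2Φ(−c·ℓ̂/2) = 2Φ(−m̂) and the maximal value is g(ℓ̂) = 8m̂²·Φ(−m̂)/c². -/

import Mathlib

open MeasureTheory

open Set Filter Topology
open scoped ENNReal

/-- The standard normal cumulative distribution function
`Φ(x) = ∫_{−∞}^x (2π)^{−1/2} e^{−t²/2} dt`. -/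
noncomputable def Phi (x : ℝ) : ℝ :=
  ∫ t in Set.Iic x, (Real.sqrt (2 * Real.pi))⁻¹ * Real.exp (-t ^ 2 / 2)

/-- The standard normal density `φ(x) = (2π)^{−1/2} e^{−x²/2}`. -/
noncomputable def phi (x : ℝ) : ℝ :=
  (Real.sqrt (2 * Real.pi))⁻¹ * Real.exp (-x ^ 2 / 2)

lemma phi_pos (x : ℝ) : 0 < phi x := by
  unfold phi
  have h2 : (0:ℝ) < Real.sqrt (2 * Real.pi) :=
    Real.sqrt_pos.2 (by positivity)
  positivity

lemma continuous_phi : Continuous phi := by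
  unfold phi; fun_prop

lemma integrable_phi : Integrable phi := by
  have h : Integrable (fun t : ℝ => Real.exp (-(1/2) * t ^ 2)) :=
    integrable_exp_neg_mul_sq (by norm_num)
  have : phi = fun t => (Real.sqrt (2 * Real.pi))⁻¹ * Real.exp (-(1/2) * t ^ 2) := by
    funext t; unfold phi; congr 1; ring_nf
  rw [this]
  exact h.const_mul _

lemma integrable_mul_phi : Integrable (fun t : ℝ => t * phi t) := by
  have h : Integrable (fun t : ℝ => t * Real.exp (-(1/2) * t ^ 2)) :=
    integrable_mul_exp_neg_mul_sq (by norm_num)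
  have : (fun t : ℝ => t * phi t)
      = fun t => (Real.sqrt (2 * Real.pi))⁻¹ * (t * Real.exp (-(1/2) * t ^ 2)) := by
    funext t; unfold phi; rw [show -(1/2) * t ^ 2 = -t^2/2 by ring]; ring
  rw [this]
  exact h.const_mul _

lemma Phi_eq (x : ℝ) : Phi x = ∫ t in Set.Iic x, phi t := rfl

lemma hasDerivAt_Phi (x : ℝ) : HasDerivAt Phi (phi x) x := by
  have key : ∀ y : ℝ, Phi y = Phi 0 + ∫ t in (0:ℝ)..y, phi t := by
    intro y
    rw [← intervalIntegral.integral_Iic_sub_Iic integrable_phi.integrableOn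
      integrable_phi.integrableOn, Phi_eq, Phi_eq]
    ring
  have h1 : HasDerivAt (fun u : ℝ => ∫ t in (0:ℝ)..u, phi t) (phi x) x :=
    intervalIntegral.integral_hasDerivAt_right
      integrable_phi.intervalIntegrable
      (continuous_phi.stronglyMeasurableAtFilter _ _)
      continuous_phi.continuousAt
  have h2 := (h1.const_add (Phi 0))
  have : Phi = fun y => Phi 0 + ∫ t in (0:ℝ)..y, phi t := funext key
  rw [this]
  exact h2

lemma Phi_pos (x : ℝ) : 0 < Phi x := by
  rw [Phi_eq]
  rw [setIntegral_pos_iff_support_of_nonneg_ae]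
  · have hsub : Set.Iic x ⊆ Function.support phi ∩ Set.Iic x := fun t ht =>
      ⟨(phi_pos t).ne', ht⟩
    calc (0:ℝ≥0∞) < volume (Set.Iic x) := by simp [Real.volume_Iic]
      _ ≤ volume (Function.support phi ∩ Set.Iic x) := measure_mono hsub
  · exact Filter.Eventually.of_forall fun t => (phi_pos t).le
  · exact integrable_phi.integrableOn

lemma hasDerivAt_phi (x : ℝ) : HasDerivAt phi (-x * phi x) x := by
  have h1 : HasDerivAt (fun t : ℝ => -t ^ 2 / 2) (-x) x := by
    have h0 := ((hasDerivAt_pow 2 x).neg).div_const 2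
    refine h0.congr_deriv ?_
    push_cast
    ring
  have h3 := (h1.exp).const_mul ((Real.sqrt (2 * Real.pi))⁻¹)
  have he : (Real.sqrt (2 * Real.pi))⁻¹ * (Real.exp (-x ^ 2 / 2) * -x) = -x * phi x := by
    unfold phi; ring
  rw [he] at h3
  exact h3

lemma tendsto_phi_atBot : Tendsto phi atBot (𝓝 0) := by
  have h1 : Tendsto (fun t : ℝ => -t ^ 2 / 2) atBot atBot := by
    apply Tendsto.atBot_div_const (by norm_num)
    apply tendsto_neg_atTop_atBot.comp
    have : Tendsto (fun t : ℝ => t ^ 2) atBot atTop := by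
      have habs : Tendsto (fun t : ℝ => |t|) atBot atTop := tendsto_abs_atBot_atTop
      have hsq : Tendsto (fun y : ℝ => y ^ 2) atTop atTop := tendsto_pow_atTop (by norm_num)
      have := hsq.comp habs
      simpa [Function.comp_def, sq_abs] using this
    exact this
  have h2 : Tendsto (fun t : ℝ => Real.exp (-t ^ 2 / 2)) atBot (𝓝 0) :=
    Real.tendsto_exp_atBot.comp h1
  have h3 := h2.const_mul ((Real.sqrt (2 * Real.pi))⁻¹)
  rw [mul_zero] at h3
  exact h3

lemma integrable_neg_mul_phi : Integrable (fun t : ℝ => -t * phi t) := by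
  have hfe : (fun t : ℝ => -t * phi t) = fun t => -(t * phi t) := by funext t; ring
  rw [hfe]
  exact integrable_mul_phi.neg

lemma integral_neg_mul_phi (a : ℝ) : ∫ t in Set.Iic a, (-t) * phi t = phi a := by
  have h := integral_Iic_of_hasDerivAt_of_tendsto
    (f := phi) (f' := fun t => -t * phi t) (a := a)
    (continuous_phi.continuousWithinAt)
    (fun x _ => hasDerivAt_phi x)
    integrable_neg_mul_phi.integrableOn
    tendsto_phi_atBot
  simpa using h

lemma mills (x : ℝ) (_hx : 0 < x) : x * Phi (-x) < phi x := by
  have hint1 : Integrable (fun t : ℝ => ((-t) - x) * phi t) := by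
    have : (fun t : ℝ => ((-t) - x) * phi t)
        = fun t => (-(t * phi t)) - x * phi t := by funext t; ring
    rw [this]
    exact integrable_mul_phi.neg.sub (integrable_phi.const_mul x)
  have hpos : 0 < ∫ t in Set.Iic (-x), ((-t) - x) * phi t := by
    rw [setIntegral_pos_iff_support_of_nonneg_ae]
    · have hsub : Set.Iio (-x) ⊆
          Function.support (fun t => ((-t) - x) * phi t) ∩ Set.Iic (-x) := by
        intro t ht
        refine ⟨?_, le_of_lt (Set.mem_Iio.1 ht)⟩
        have h1 : 0 < (-t) - x := by simp only [Set.mem_Iio] at ht; linarith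
        exact (mul_pos h1 (phi_pos t)).ne'
      calc (0:ℝ≥0∞) < volume (Set.Iio (-x)) := by simp [Real.volume_Iio]
        _ ≤ _ := measure_mono hsub
    · filter_upwards [ae_restrict_mem measurableSet_Iic] with t ht
      have h1 : (0:ℝ) ≤ (-t) - x := by simp only [Set.mem_Iic] at ht; linarith
      exact mul_nonneg h1 (phi_pos t).le
    · exact hint1.integrableOn
  have hsplit : ∫ t in Set.Iic (-x), ((-t) - x) * phi t
      = (∫ t in Set.Iic (-x), (-t) * phi t) - ∫ t in Set.Iic (-x), x * phi t := by
    have hfe : (fun t : ℝ => ((-t) - x) * phi t)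
        = fun t => (-t) * phi t - x * phi t := by funext t; ring
    rw [hfe, integral_sub integrable_neg_mul_phi.integrableOn
      ((integrable_phi.const_mul x).integrableOn)]
  have hx2 : ∫ t in Set.Iic (-x), x * phi t = x * Phi (-x) := by
    rw [Phi_eq, integral_const_mul]
  have hphi_neg : phi (-x) = phi x := by
    unfold phi; rw [show (-x) ^ 2 = x ^ 2 by ring]
  rw [hsplit, integral_neg_mul_phi, hx2, hphi_neg] at hpos
  linarith

/-- `F(x) = 2Φ(−x) − xφ(x)`. -/
noncomputable def Fm (x : ℝ) : ℝ := 2 * Phi (-x) - x * phi x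

/-- `h(x) = x²Φ(−x)`. -/
noncomputable def hh (x : ℝ) : ℝ := x ^ 2 * Phi (-x)

lemma hasDerivAt_Phi_neg (x : ℝ) : HasDerivAt (fun y : ℝ => Phi (-y)) (-phi x) x := by
  have h := (hasDerivAt_Phi (-x)).comp x (hasDerivAt_neg x)
  have hphi_neg : phi (-x) = phi x := by
    unfold phi; rw [show (-x) ^ 2 = x ^ 2 by ring]
  simp [Function.comp, hphi_neg] at h
  exact h

lemma hasDerivAt_Fm (x : ℝ) : HasDerivAt Fm ((x ^ 2 - 3) * phi x) x := by
  have h1 := (hasDerivAt_Phi_neg x).const_mul (2:ℝ)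
  have h2 := (hasDerivAt_id x).mul (hasDerivAt_phi x)
  have h := h1.sub h2
  refine h.congr_deriv ?_
  simp only [id_eq]
  ring

lemma hasDerivAt_hh (x : ℝ) : HasDerivAt hh (x * Fm x) x := by
  have h := (hasDerivAt_pow 2 x).mul (hasDerivAt_Phi_neg x)
  refine h.congr_deriv ?_
  unfold Fm
  push_cast
  ring

lemma continuous_Phi : Continuous Phi :=
  continuous_iff_continuousAt.2 fun x => (hasDerivAt_Phi x).continuousAt

lemma Fm_strictAnti : StrictAntiOn Fm (Set.Icc 0 (Real.sqrt 2)) := by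
  apply strictAntiOn_of_deriv_neg (convex_Icc _ _)
  · exact ((continuous_const.mul (continuous_Phi.comp continuous_neg)).sub
      (continuous_id.mul continuous_phi)).continuousOn
  · intro x hx
    rw [interior_Icc] at hx
    rw [(hasDerivAt_Fm x).deriv]
    have hx2 : x ^ 2 < 2 := by
      have := hx.2
      have h0 : 0 ≤ x := hx.1.le
      nlinarith [Real.sq_sqrt (by norm_num : (2:ℝ) ≥ 0), Real.sqrt_nonneg 2]
    have := phi_pos x
    nlinarith

lemma Fm_neg_of_sqrt2_le {x : ℝ} (hx : Real.sqrt 2 ≤ x) : Fm x < 0 := by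
  have hx0 : 0 < x := lt_of_lt_of_le (Real.sqrt_pos.2 (by norm_num)) hx
  have hx2 : 2 ≤ x ^ 2 := by
    nlinarith [Real.sq_sqrt (by norm_num : (2:ℝ) ≥ 0), Real.sqrt_nonneg 2]
  have hmills := mills x hx0
  have hp := phi_pos x
  have hP := Phi_pos (-x)
  unfold Fm
  nlinarith

/-- For any fixed `c > 0`, the function `g(ℓ) = 2ℓ²·Φ(−c·ℓ/2)` on
`(0, ∞)` attains its global maximum at the unique point `ℓ̂ = 2m̂/c`, where `m̂` is the
unique positive real with `2Φ(−m̂) = m̂·φ(m̂)`; moreover `2Φ(−c·ℓ̂/2) = 2Φ(−m̂)` and the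
maximal value is `g(ℓ̂) = 8m̂²·Φ(−m̂)/c²`. -/
theorem optimal_scaling_constant_roughness (c : ℝ) (hc : 0 < c)
    (m : ℝ) (hm : 0 < m) (hmeq : 2 * Phi (-m) = m * phi m) :
    (∀ ℓ : ℝ, 0 < ℓ →
        2 * ℓ ^ 2 * Phi (-(c * ℓ) / 2) ≤
          2 * (2 * m / c) ^ 2 * Phi (-(c * (2 * m / c)) / 2)) ∧
    (∀ ℓ : ℝ, 0 < ℓ →
        2 * ℓ ^ 2 * Phi (-(c * ℓ) / 2) =
            2 * (2 * m / c) ^ 2 * Phi (-(c * (2 * m / c)) / 2) →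
          ℓ = 2 * m / c) ∧
    2 * Phi (-(c * (2 * m / c)) / 2) = 2 * Phi (-m) ∧
    2 * (2 * m / c) ^ 2 * Phi (-(c * (2 * m / c)) / 2) = 8 * m ^ 2 * Phi (-m) / c ^ 2 := by
  have hFm0 : Fm m = 0 := by unfold Fm; linarith
  have hm_lt : m < Real.sqrt 2 := by
    by_contra h
    push_neg at h
    exact absurd hFm0 (Fm_neg_of_sqrt2_le h).ne
  -- sign of Fm
  have hFpos : ∀ x, 0 < x → x < m → 0 < Fm x := by
    intro x hx0 hxm
    have := Fm_strictAnti ⟨hx0.le, (hxm.trans hm_lt).le⟩ ⟨hm.le, hm_lt.le⟩ hxm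
    linarith [hFm0]
  have hFneg : ∀ x, m < x → Fm x < 0 := by
    intro x hxm
    rcases le_or_gt x (Real.sqrt 2) with hle | hlt
    · have := Fm_strictAnti ⟨hm.le, hm_lt.le⟩ ⟨(hm.trans hxm).le, hle⟩ hxm
      linarith [hFm0]
    · exact Fm_neg_of_sqrt2_le hlt.le
  -- hh monotonicity
  have hcont_hh : Continuous hh := by
    unfold hh
    exact (continuous_pow 2).mul (continuous_Phi.comp continuous_neg)
  have hmono : StrictMonoOn hh (Set.Icc 0 m) := by
    apply strictMonoOn_of_deriv_pos (convex_Icc _ _) hcont_hh.continuousOn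
    intro x hx
    rw [interior_Icc] at hx
    rw [(hasDerivAt_hh x).deriv]
    exact mul_pos hx.1 (hFpos x hx.1 hx.2)
  have hanti : StrictAntiOn hh (Set.Ici m) := by
    apply strictAntiOn_of_deriv_neg (convex_Ici _) hcont_hh.continuousOn
    intro x hx
    rw [interior_Ici] at hx
    rw [(hasDerivAt_hh x).deriv]
    exact mul_neg_of_pos_of_neg (hm.trans hx) (hFneg x hx)
  have hmax : ∀ x, 0 < x → x ≠ m → hh x < hh m := by
    intro x hx0 hxne
    rcases lt_or_gt_of_ne hxne with hlt | hgt
    · exact hmono ⟨hx0.le, hlt.le⟩ ⟨hm.le, le_rfl⟩ hlt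
    · exact hanti (Set.mem_Ici.2 le_rfl) (Set.mem_Ici.2 hgt.le) hgt
  have hcne : c ≠ 0 := hc.ne'
  have ha : -(c * (2 * m / c)) / 2 = -m := by field_simp
  have e2 : 2 * (2 * m / c) ^ 2 * Phi (-(c * (2 * m / c)) / 2) = 8 / c ^ 2 * hh m := by
    rw [ha]; unfold hh; field_simp; ring
  have e1 : ∀ ℓ : ℝ, 2 * ℓ ^ 2 * Phi (-(c * ℓ) / 2) = 8 / c ^ 2 * hh (c * ℓ / 2) := by
    intro ℓ
    unfold hh
    rw [show -(c * ℓ / 2) = -(c * ℓ) / 2 by ring]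
    field_simp
    ring
  refine ⟨?_, ?_, ?_, ?_⟩
  · intro ℓ hℓ
    rw [e1 ℓ, e2]
    have hx0 : 0 < c * ℓ / 2 := by positivity
    rcases eq_or_ne (c * ℓ / 2) m with heq | hne
    · rw [heq]
    · have := hmax _ hx0 hne
      have h8 : (0:ℝ) < 8 / c ^ 2 := by positivity
      nlinarith
  · intro ℓ hℓ heq
    rw [e1 ℓ, e2] at heq
    have hx0 : 0 < c * ℓ / 2 := by positivity
    have h8 : (8:ℝ) / c ^ 2 ≠ 0 := by positivity
    have hhh : hh (c * ℓ / 2) = hh m := mul_left_cancel₀ h8 heq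
    have hxm : c * ℓ / 2 = m := by
      by_contra hne
      exact absurd hhh (hmax _ hx0 hne).ne
    field_simp
    linarith
  · rw [ha]
  · rw [ha]; ring
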